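/- For the inhibitory mean-field model, at any point (r,V,S) with r ≠ 0, the three vectors F₁ = (0,1,0), [F₀,F₁] = (−2r/τ_m, −2V/τ_m, 0), and ad²_{F₀}F₁ (whose third component is r/(τ_m τ_d)) are linearly independent, i.e. they span R³. -/

import Mathlib

open Real

/-- For the inhibitory mean-field model, at a point with r ≠ 0 the three
vectors F₁, [F₀,F₁] and ad²_{F₀}F₁ are linearly independent and span ℝ³. -/
theorem stmt4 (Δ τm τd J I : ℝ) (hτm : τm ≠ 0) (hτd : τd ≠ 0)
    (r V S : ℝ) (hr : r ≠ 0)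
    (v₁ v₂ v₃ : Fin 3 → ℝ)
    (hv₁ : v₁ = ![0, 1, 0])
    (hv₂ : v₂ = ![-2 * r / τm, -2 * V / τm, 0])
    (hv₃ : v₃ = (2 / τm ^ 2) • ![2 * V * r - Δ / (π * τm),
      V ^ 2 - (τm * π * r) ^ 2 + J * τm * S - I, r * τm / (2 * τd)]) :
    LinearIndependent ℝ ![v₁, v₂, v₃] ∧
    Submodule.span ℝ ({v₁, v₂, v₃} : Set (Fin 3 → ℝ)) = ⊤ := by
  have hM : LinearIndependent ℝ (fun i => (Matrix.of ![v₁, v₂, v₃]) i) := by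
    change LinearIndependent ℝ (Matrix.row (Matrix.of ![v₁, v₂, v₃]))
    rw [Matrix.linearIndependent_rows_iff_isUnit, Matrix.isUnit_iff_isUnit_det,
      isUnit_iff_ne_zero]
    subst hv₁ hv₂ hv₃
    rw [Matrix.det_fin_three]
    simp [Matrix.smul_cons]
    exact ⟨⟨hr, hτm⟩, hτm, ⟨hr, hτm⟩, hτd⟩
  have hli : LinearIndependent ℝ ![v₁, v₂, v₃] := hM
  refine ⟨hli, ?_⟩
  have := hli.span_eq_top_of_card_eq_finrank (by simp)
  rw [← this]
  congr 1
  simp [Set.range_subset_iff]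
  ext x
  simp [Matrix.range_cons, Matrix.range_empty]
  tauto
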